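/- Let D be a poset with 2 elements that is an antichain, and R = P ⊕ D ⊕ Q for any finite posets P, Q with |P| = p. Then for all i+1 < j < k, the element (t_i q_{jk})^2 fixes the labels of the elements of D in every linear extension of R. (Only t_{p+1} can affect these labels, and it occurs an even number of times in the word (t_i q_{jk})^2.) -/

import Mathlib

open Classical in
/-- The Bender-Knuth involution `t_i` acting on labelings of a poset. -/
noncomputable def BK {α : Type*} [PartialOrder α] (i : ℕ) (f : α → ℕ) : α → ℕ :=
  if ∃ a b : α, f a = i ∧ f b = i + 1 ∧ ¬ a ≤ b ∧ ¬ b ≤ a then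
    fun x => if f x = i then i + 1 else if f x = i + 1 then i else f x
  else f

/-- Promotion `∂_k = t_{k-1} t_{k-2} ⋯ t_1` acting on labelings. -/
noncomputable def BKprom {α : Type*} [PartialOrder α] : ℕ → (α → ℕ) → (α → ℕ)
  | 0, f => f
  | 1, f => f
  | (k + 2), f => BK (k + 1) (BKprom (k + 1) f)

/-- Evacuation `q_i = t_1 (t_2 t_1) ⋯ (t_i ⋯ t_1) = ∂_1 ∂_2 ⋯ ∂_{i+1}`. -/
noncomputable def BKq {α : Type*} [PartialOrder α] : ℕ → (α → ℕ) → (α → ℕ)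
  | 0, f => f
  | (k + 1), f => BKq k (BKprom (k + 2) f)

/-- `q_{jk} = q_{k-1} q_{k-j} q_{k-1}` acting on labelings. -/
noncomputable def BKqjk {α : Type*} [PartialOrder α] (j k : ℕ) (f : α → ℕ) : α → ℕ :=
  BKq (k - 1) (BKq (k - j) (BKq (k - 1) f))

/-- `f` is a linear extension of the finite poset `α`. -/
def IsLinExt {α : Type*} [PartialOrder α] [Fintype α] (f : α → ℕ) : Prop :=
  Set.BijOn f Set.univ (Set.Icc 1 (Fintype.card α)) ∧ ∀ a b : α, a < b → f a < f b

instance {P Q : Type*} [Fintype P] [Fintype Q] : Fintype (P ⊕ₗ Q) :=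
  inferInstanceAs (Fintype (P ⊕ Q))

/-! ### Auxiliary material -/

set_option linter.unusedSectionVars false

namespace CactusAux

open Classical

/-- Swapping the values `p+1` and `p+2`. -/
def Flip (p v : ℕ) : ℕ := if v = p + 1 then p + 2 else p + 1

section Generic

variable {α : Type*} [PartialOrder α] [Fintype α]

lemma BK_eq_of_ex {g : α → ℕ} {m : ℕ}
    (h : ∃ a b : α, g a = m ∧ g b = m + 1 ∧ ¬ a ≤ b ∧ ¬ b ≤ a) :
    BK m g = fun x => Equiv.swap m (m + 1) (g x) := by
  rw [BK, if_pos h]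
  funext x
  rw [Equiv.swap_apply_def]

lemma BK_eq_of_not_ex {g : α → ℕ} {m : ℕ}
    (h : ¬ ∃ a b : α, g a = m ∧ g b = m + 1 ∧ ¬ a ≤ b ∧ ¬ b ≤ a) :
    BK m g = g := by
  rw [BK, if_neg h]

lemma swap_linext {g : α → ℕ} (hg : IsLinExt g) {m : ℕ} {a b : α}
    (ha : g a = m) (hb : g b = m + 1) (hab : ¬ a ≤ b) :
    IsLinExt (fun x => Equiv.swap m (m + 1) (g x)) := by
  have hmem : ∀ x : α, g x ∈ Set.Icc 1 (Fintype.card α) := fun x => hg.1.mapsTo trivial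
  have hinj : ∀ x y : α, g x = g y → x = y := fun x y h => hg.1.injOn trivial trivial h
  have hm : m ∈ Set.Icc 1 (Fintype.card α) := ha ▸ hmem a
  have hm1 : m + 1 ∈ Set.Icc 1 (Fintype.card α) := hb ▸ hmem b
  constructor
  · have hswap : Set.BijOn (Equiv.swap m (m + 1))
        (Set.Icc 1 (Fintype.card α)) (Set.Icc 1 (Fintype.card α)) := by
      refine ⟨?_, (Equiv.injective _).injOn, ?_⟩
      · intro v hv
        rw [Equiv.swap_apply_def]
        split_ifs <;> assumption
      · intro v hv
        refine ⟨Equiv.swap m (m + 1) v, ?_, ?_⟩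
        · rw [Equiv.swap_apply_def]
          split_ifs <;> assumption
        · simp
    exact hswap.comp hg.1
  · intro u w huw
    have hlt := hg.2 u w huw
    simp only [Equiv.swap_apply_def]
    by_cases hbad : g u = m ∧ g w = m + 1
    · exfalso
      have hua : u = a := hinj _ _ (hbad.1.trans ha.symm)
      have hwb : w = b := hinj _ _ (hbad.2.trans hb.symm)
      exact hab (hua ▸ hwb ▸ huw.le)
    · rcases not_and_or.mp hbad with h | h <;> split_ifs <;> omega

lemma BK_linext {g : α → ℕ} (hg : IsLinExt g) (m : ℕ) : IsLinExt (BK m g) := by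
  by_cases h : ∃ a b : α, g a = m ∧ g b = m + 1 ∧ ¬ a ≤ b ∧ ¬ b ≤ a
  · obtain ⟨a, b, ha, hb, hab, hba⟩ := h
    rw [BK_eq_of_ex ⟨a, b, ha, hb, hab, hba⟩]
    exact swap_linext hg ha hb hab
  · rw [BK_eq_of_not_ex h]
    exact hg

lemma count_below {g : α → ℕ} (hg : IsLinExt g) (z : α) :
    (Finset.univ.filter (fun w => w < z)).card + 1 ≤ g z := by
  have h1 : 1 ≤ g z := (hg.1.mapsTo (Set.mem_univ z)).1
  have key : (Finset.univ.filter (fun w => w < z)).card ≤ (Finset.Ico 1 (g z)).card := by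
    apply Finset.card_le_card_of_injOn g
    · intro u hu
      rw [Finset.mem_coe, Finset.mem_filter] at hu
      rw [Finset.mem_coe, Finset.mem_Ico]
      exact ⟨(hg.1.mapsTo (Set.mem_univ u)).1, hg.2 u z hu.2⟩
    · intro u _ v _ h
      exact hg.1.injOn trivial trivial h
  rw [Nat.card_Ico] at key
  omega

lemma count_above {g : α → ℕ} (hg : IsLinExt g) (z : α) :
    g z + (Finset.univ.filter (fun w => z < w)).card ≤ Fintype.card α := by
  have h1 : g z ≤ Fintype.card α := (hg.1.mapsTo (Set.mem_univ z)).2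
  have key : (Finset.univ.filter (fun w => z < w)).card ≤ (Finset.Ioc (g z) (Fintype.card α)).card := by
    apply Finset.card_le_card_of_injOn g
    · intro u hu
      rw [Finset.mem_coe, Finset.mem_filter] at hu
      rw [Finset.mem_coe, Finset.mem_Ioc]
      exact ⟨hg.2 z u hu.2, (hg.1.mapsTo (Set.mem_univ u)).2⟩
    · intro u _ v _ h
      exact hg.1.injOn trivial trivial h
  rw [Nat.card_Ioc] at key
  omega

end Generic

section Specific

variable {P D Q : Type*} [PartialOrder P] [PartialOrder D] [PartialOrder Q]
  [Fintype P] [Fintype D] [Fintype Q]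

/-- Embedding of `P` into the ordinal sum. -/
def eP (a : P) : (P ⊕ₗ D) ⊕ₗ Q := toLex (Sum.inl (toLex (Sum.inl a)))

/-- Embedding of `D` into the ordinal sum. -/
def eD (x : D) : (P ⊕ₗ D) ⊕ₗ Q := toLex (Sum.inl (toLex (Sum.inr x)))

/-- Embedding of `Q` into the ordinal sum. -/
def eQ (b : Q) : (P ⊕ₗ D) ⊕ₗ Q := toLex (Sum.inr b)

lemma eP_lt_eD (a : P) (x : D) : eP (Q := Q) a < eD x :=
  Sum.Lex.inl_lt_inl_iff.2 (Sum.Lex.inl_lt_inr a x)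

lemma eD_lt_eQ (x : D) (b : Q) : eD (P := P) x < eQ b :=
  Sum.Lex.inl_lt_inr _ _

lemma eP_lt_eQ (a : P) (b : Q) : eP (D := D) a < eQ b :=
  Sum.Lex.inl_lt_inr _ _

lemma eD_le_eD {x y : D} : eD (P := P) (Q := Q) x ≤ eD y ↔ x ≤ y := by
  rw [eD, eD, Sum.Lex.inl_le_inl_iff, Sum.Lex.inr_le_inr_iff]

lemma eP_inj : Function.Injective (eP (P := P) (D := D) (Q := Q)) := by
  intro a b h
  exact Sum.inl.inj (toLex.injective (Sum.inl.inj (toLex.injective h)))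

lemma eD_inj : Function.Injective (eD (P := P) (D := D) (Q := Q)) := by
  intro a b h
  exact Sum.inr.inj (toLex.injective (Sum.inl.inj (toLex.injective h)))

lemma eQ_inj : Function.Injective (eQ (P := P) (D := D) (Q := Q)) := by
  intro a b h
  exact Sum.inr.inj (toLex.injective h)

lemma eP_ne_eD (a : P) (x : D) : eP (Q := Q) a ≠ eD x := fun h => by
  simpa using toLex.injective (Sum.inl.inj (toLex.injective h))

lemma eD_ne_eQ (x : D) (b : Q) : eD (P := P) x ≠ eQ b := fun h => by
  simpa using toLex.injective h

lemma eP_ne_eQ (a : P) (b : Q) : eP (D := D) a ≠ eQ b := fun h => by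
  simpa using toLex.injective h

lemma classify (z : (P ⊕ₗ D) ⊕ₗ Q) :
    (∃ a, z = eP a) ∨ (∃ x, z = eD x) ∨ (∃ b, z = eQ b) := by
  obtain w | b := z
  · obtain a | x := w
    · exact Or.inl ⟨a, rfl⟩
    · exact Or.inr (Or.inl ⟨x, rfl⟩)
  · exact Or.inr (Or.inr ⟨b, rfl⟩)

lemma card_R : Fintype.card ((P ⊕ₗ D) ⊕ₗ Q)
    = Fintype.card P + Fintype.card D + Fintype.card Q := by
  rw [show Fintype.card ((P ⊕ₗ D) ⊕ₗ Q) = Fintype.card ((P ⊕ₗ D) ⊕ Q) from rfl,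
    Fintype.card_sum,
    show Fintype.card (P ⊕ₗ D) = Fintype.card (P ⊕ D) from rfl, Fintype.card_sum]

lemma below_eD (x : D) :
    Fintype.card P ≤ (Finset.univ.filter (fun w => w < eD (P := P) (Q := Q) x)).card := by
  rw [← Finset.card_univ (α := P)]
  apply Finset.card_le_card_of_injOn eP
  · intro a _
    rw [Finset.mem_coe, Finset.mem_filter]
    exact ⟨Finset.mem_univ _, eP_lt_eD a x⟩
  · exact eP_inj.injOn

lemma above_eD (x : D) :
    Fintype.card Q ≤ (Finset.univ.filter (fun w => eD (P := P) (Q := Q) x < w)).card := by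
  rw [← Finset.card_univ (α := Q)]
  apply Finset.card_le_card_of_injOn eQ
  · intro b _
    rw [Finset.mem_coe, Finset.mem_filter]
    exact ⟨Finset.mem_univ _, eD_lt_eQ x b⟩
  · exact eQ_inj.injOn

lemma above_eP (a : P) :
    Fintype.card D + Fintype.card Q
      ≤ (Finset.univ.filter (fun w => eP (D := D) (Q := Q) a < w)).card := by
  rw [← Fintype.card_sum, ← Finset.card_univ (α := D ⊕ Q)]
  apply Finset.card_le_card_of_injOn (Sum.elim eD eQ)
  · rintro (x | b) _ <;> rw [Finset.mem_coe, Finset.mem_filter]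
    · exact ⟨Finset.mem_univ _, eP_lt_eD a x⟩
    · exact ⟨Finset.mem_univ _, eP_lt_eQ a b⟩
  · rintro (x | b) - (x' | b') - h <;>
      simp only [Sum.elim_inl, Sum.elim_inr] at h
    · exact congrArg Sum.inl (eD_inj h)
    · exact absurd h (eD_ne_eQ _ _)
    · exact absurd h.symm (eD_ne_eQ _ _)
    · exact congrArg Sum.inr (eQ_inj h)

lemma below_eQ (b : Q) :
    Fintype.card P + Fintype.card D
      ≤ (Finset.univ.filter (fun w => w < eQ (P := P) (D := D) b)).card := by
  rw [← Fintype.card_sum, ← Finset.card_univ (α := P ⊕ D)]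
  apply Finset.card_le_card_of_injOn (Sum.elim eP eD)
  · rintro (a | x) _ <;> rw [Finset.mem_coe, Finset.mem_filter]
    · exact ⟨Finset.mem_univ _, eP_lt_eQ a b⟩
    · exact ⟨Finset.mem_univ _, eD_lt_eQ x b⟩
  · rintro (a | x) - (a' | x') - h <;>
      simp only [Sum.elim_inl, Sum.elim_inr] at h
    · exact congrArg Sum.inl (eP_inj h)
    · exact absurd h (eP_ne_eD _ _)
    · exact absurd h.symm (eP_ne_eD _ _)
    · exact congrArg Sum.inr (eD_inj h)

variable {g : ((P ⊕ₗ D) ⊕ₗ Q) → ℕ}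

lemma valP_ub (hg : IsLinExt g) (a : P) : g (eP a) ≤ Fintype.card P := by
  have h1 := count_above hg (eP a)
  have h2 := above_eP (D := D) (Q := Q) a
  have h3 := card_R (P := P) (D := D) (Q := Q)
  omega

lemma valD_lb (hg : IsLinExt g) (x : D) : Fintype.card P + 1 ≤ g (eD x) := by
  have h1 := count_below hg (eD x)
  have h2 := below_eD (P := P) (Q := Q) x
  omega

lemma valD_ub (hg : IsLinExt g) (x : D) :
    g (eD x) ≤ Fintype.card P + Fintype.card D := by
  have h1 := count_above hg (eD x)
  have h2 := above_eD (P := P) (Q := Q) x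
  have h3 := card_R (P := P) (D := D) (Q := Q)
  omega

lemma valQ_lb (hg : IsLinExt g) (b : Q) :
    Fintype.card P + Fintype.card D + 1 ≤ g (eQ b) := by
  have h1 := count_below hg (eQ b)
  have h2 := below_eQ (P := P) (D := D) b
  omega

lemma eq_eP_of_val (hg : IsLinExt g) {z : (P ⊕ₗ D) ⊕ₗ Q}
    (hz : g z ≤ Fintype.card P) : ∃ a, z = eP a := by
  rcases classify z with ⟨a, rfl⟩ | ⟨x, rfl⟩ | ⟨b, rfl⟩
  · exact ⟨a, rfl⟩
  · have := valD_lb hg x; omega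
  · have := valQ_lb hg b; omega

lemma eq_eD_of_val (hg : IsLinExt g) {z : (P ⊕ₗ D) ⊕ₗ Q}
    (hz1 : Fintype.card P + 1 ≤ g z) (hz2 : g z ≤ Fintype.card P + Fintype.card D) :
    ∃ x, z = eD x := by
  rcases classify z with ⟨a, rfl⟩ | ⟨x, rfl⟩ | ⟨b, rfl⟩
  · have := valP_ub hg a; omega
  · exact ⟨x, rfl⟩
  · have := valQ_lb hg b; omega

lemma BK_fixD (hD2 : Fintype.card D = 2) (hanti : ∀ a b : D, a ≤ b → a = b)
    (hg : IsLinExt g) (m : ℕ) (x : D) :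
    BK m g (eD x) = if m = Fintype.card P + 1
      then Flip (Fintype.card P) (g (eD x)) else g (eD x) := by
  have hD1 := valD_lb hg x
  have hD2' := valD_ub hg x
  by_cases hm : m = Fintype.card P + 1
  · rw [if_pos hm]
    -- in this case a swap always happens, exchanging the two labels of `D`
    obtain ⟨d₁, d₂, hd⟩ := Fintype.exists_pair_of_one_lt_card (α := D) (by omega)
    have h1 := valD_lb hg d₁
    have h2 := valD_ub hg d₁
    have h3 := valD_lb hg d₂
    have h4 := valD_ub hg d₂
    have hne : g (eD d₁) ≠ g (eD d₂) := fun h =>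
      hd (eD_inj (hg.1.injOn trivial trivial h))
    have hic : ¬ eD (P := P) (Q := Q) d₁ ≤ eD d₂ := fun h => hd (hanti _ _ (eD_le_eD.1 h))
    have hic' : ¬ eD (P := P) (Q := Q) d₂ ≤ eD d₁ := fun h =>
      hd ((hanti _ _ (eD_le_eD.1 h)).symm)
    have hex : ∃ a b : (P ⊕ₗ D) ⊕ₗ Q, g a = m ∧ g b = m + 1 ∧ ¬ a ≤ b ∧ ¬ b ≤ a := by
      by_cases hv : g (eD d₁) = Fintype.card P + 1
      · exact ⟨eD d₁, eD d₂, by omega, by omega, hic, hic'⟩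
      · exact ⟨eD d₂, eD d₁, by omega, by omega, hic', hic⟩
    rw [BK_eq_of_ex hex]
    simp only [Equiv.swap_apply_def]
    subst hm
    simp only [Flip]
    split_ifs <;> omega
  · rw [if_neg hm]
    by_cases h : ∃ a b : (P ⊕ₗ D) ⊕ₗ Q, g a = m ∧ g b = m + 1 ∧ ¬ a ≤ b ∧ ¬ b ≤ a
    · obtain ⟨a, b, ha, hb, hab, hba⟩ := h
      rw [BK_eq_of_ex ⟨a, b, ha, hb, hab, hba⟩]
      simp only [Equiv.swap_apply_def]
      have hv1 : g (eD x) ≠ m := by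
        intro hv
        -- then m = card P + 2, so `a` lies in `D` and `b` lies in `Q`
        obtain ⟨x', rfl⟩ : ∃ x', a = eD x' := eq_eD_of_val hg (by omega) (by omega)
        obtain ⟨b', rfl⟩ : ∃ b', b = eQ b' := by
          rcases classify b with ⟨a', rfl⟩ | ⟨x'', rfl⟩ | ⟨b', rfl⟩
          · have := valP_ub hg a'; omega
          · have := valD_ub hg x''; omega
          · exact ⟨b', rfl⟩
        exact hab (eD_lt_eQ x' b').le
      have hv2 : g (eD x) ≠ m + 1 := by
        intro hv
        -- then m = card P, so `a` lies in `P` and `b` lies in `D`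
        obtain ⟨a', rfl⟩ : ∃ a', a = eP a' := eq_eP_of_val hg (by omega)
        obtain ⟨x'', rfl⟩ : ∃ x'', b = eD x'' := eq_eD_of_val hg (by omega) (by omega)
        exact hab (eP_lt_eD a' x'').le
      rw [if_neg hv1, if_neg hv2]
    · rw [BK_eq_of_not_ex h]

/-- The key invariant: an operator on labelings preserves linear extensions and
acts on the labels of `D` either trivially or by the flip, uniformly. -/
def FixesD (op : (((P ⊕ₗ D) ⊕ₗ Q) → ℕ) → ((P ⊕ₗ D) ⊕ₗ Q) → ℕ) : Prop :=
  ∃ c : Bool, ∀ g : ((P ⊕ₗ D) ⊕ₗ Q) → ℕ, IsLinExt g → IsLinExt (op g) ∧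
    ∀ x : D, op g (eD x) = if c then Flip (Fintype.card P) (g (eD x)) else g (eD x)

variable (hD2 : Fintype.card D = 2) (hanti : ∀ a b : D, a ≤ b → a = b)

include hD2 hanti in
lemma fixesD_BK (m : ℕ) : FixesD (D := D) (BK (α := (P ⊕ₗ D) ⊕ₗ Q) m) := by
  refine ⟨decide (m = Fintype.card P + 1), fun g hg => ⟨BK_linext hg m, fun x => ?_⟩⟩
  rw [BK_fixD hD2 hanti hg m x]
  by_cases h : m = Fintype.card P + 1 <;> simp [h]

include hD2 hanti in
lemma fixesD_comp {op1 op2 : (((P ⊕ₗ D) ⊕ₗ Q) → ℕ) → ((P ⊕ₗ D) ⊕ₗ Q) → ℕ}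
    (h1 : FixesD op1) (h2 : FixesD op2) : FixesD (fun g => op2 (op1 g)) := by
  obtain ⟨c1, H1⟩ := h1
  obtain ⟨c2, H2⟩ := h2
  refine ⟨xor c1 c2, fun g hg => ?_⟩
  obtain ⟨hl1, hv1⟩ := H1 g hg
  obtain ⟨hl2, hv2⟩ := H2 _ hl1
  refine ⟨hl2, fun x => ?_⟩
  have hb := valD_lb hg x
  have hub := valD_ub hg x
  show op2 (op1 g) (eD x) = _
  rw [hv2 x, hv1 x]
  cases c1 <;> cases c2 <;> simp [Flip] <;> split_ifs <;> omega

lemma fixesD_prom (hD2 : Fintype.card D = 2) (hanti : ∀ a b : D, a ≤ b → a = b) :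
    ∀ m : ℕ, FixesD (D := D) (BKprom (α := (P ⊕ₗ D) ⊕ₗ Q) m)
  | 0 => ⟨false, fun g hg => by
      rw [show BKprom (α := (P ⊕ₗ D) ⊕ₗ Q) 0 = fun f => f from rfl]
      exact ⟨hg, fun x => by simp⟩⟩
  | 1 => ⟨false, fun g hg => by
      rw [show BKprom (α := (P ⊕ₗ D) ⊕ₗ Q) 1 = fun f => f from rfl]
      exact ⟨hg, fun x => by simp⟩⟩
  | (m + 2) => by
      have : BKprom (α := (P ⊕ₗ D) ⊕ₗ Q) (m + 2)
          = fun f => BK (m + 1) (BKprom (m + 1) f) := rfl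
      rw [this]
      exact fixesD_comp hD2 hanti (fixesD_prom hD2 hanti (m + 1)) (fixesD_BK hD2 hanti (m + 1))

lemma fixesD_q (hD2 : Fintype.card D = 2) (hanti : ∀ a b : D, a ≤ b → a = b) :
    ∀ m : ℕ, FixesD (D := D) (BKq (α := (P ⊕ₗ D) ⊕ₗ Q) m)
  | 0 => ⟨false, fun g hg => by
      rw [show BKq (α := (P ⊕ₗ D) ⊕ₗ Q) 0 = fun f => f from rfl]
      exact ⟨hg, fun x => by simp⟩⟩
  | (m + 1) => by
      have : BKq (α := (P ⊕ₗ D) ⊕ₗ Q) (m + 1)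
          = fun f => BKq m (BKprom (m + 2) f) := rfl
      rw [this]
      exact fixesD_comp hD2 hanti (fixesD_prom hD2 hanti (m + 2)) (fixesD_q hD2 hanti m)

include hD2 hanti in
lemma fixesD_qjk (j k : ℕ) : FixesD (D := D) (BKqjk (α := (P ⊕ₗ D) ⊕ₗ Q) j k) := by
  have : BKqjk (α := (P ⊕ₗ D) ⊕ₗ Q) j k
      = fun f => BKq (k - 1) (BKq (k - j) (BKq (k - 1) f)) := rfl
  rw [this]
  exact fixesD_comp hD2 hanti
    (fixesD_comp hD2 hanti (fixesD_q hD2 hanti (k - 1)) (fixesD_q hD2 hanti (k - j)))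
    (fixesD_q hD2 hanti (k - 1))

end Specific

end CactusAux

/-- Let `D` be a 2-element antichain and `R = P ⊕ D ⊕ Q` an iterated ordinal sum.
Then for all `i + 1 < j < k`, the element `(t_i q_{jk})^2` fixes the labels of
the elements of `D` in every linear extension of `R`. -/
theorem cactus_element_fixes_two_element_antichain {P D Q : Type*}
    [PartialOrder P] [PartialOrder D] [PartialOrder Q]
    [Fintype P] [Fintype D] [Fintype Q]
    (hD2 : Fintype.card D = 2) (hanti : ∀ a b : D, a ≤ b → a = b)
    (i j k : ℕ) (hi : 1 ≤ i) (hij : i + 1 < j) (hjk : j < k)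
    (hk : k ≤ Fintype.card ((P ⊕ₗ D) ⊕ₗ Q))
    (f : ((P ⊕ₗ D) ⊕ₗ Q) → ℕ) (hf : IsLinExt f) :
    ∀ x : D, BK i (BKqjk j k (BK i (BKqjk j k f))) (toLex (Sum.inl (toLex (Sum.inr x)))) =
      f (toLex (Sum.inl (toLex (Sum.inr x)))) := by
  intro x
  obtain ⟨c1, H1⟩ := CactusAux.fixesD_qjk (P := P) (Q := Q) hD2 hanti j k
  obtain ⟨c2, H2⟩ := CactusAux.fixesD_BK (P := P) (Q := Q) hD2 hanti i
  obtain ⟨l1, v1⟩ := H1 f hf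
  obtain ⟨l2, v2⟩ := H2 _ l1
  obtain ⟨l3, v3⟩ := H1 _ l2
  obtain ⟨l4, v4⟩ := H2 _ l3
  have hb := CactusAux.valD_lb hf x
  have hub := CactusAux.valD_ub hf x
  show BK i (BKqjk j k (BK i (BKqjk j k f))) (CactusAux.eD x) = f (CactusAux.eD x)
  rw [v4 x, v3 x, v2 x, v1 x]
  cases c1 <;> cases c2 <;> simp [CactusAux.Flip] <;> split_ifs <;> omega
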